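/- Let n ≥ 1, L > 0, and let T be a natural number with L·T > 1. Let x₁,…,x_T ∈ ℝⁿ satisfy ‖x_t‖ = T for every t, and let y₁,…,y_T ∈ {abstain, commit} be any action sequence. Define two reward functions for committing: r⁺(x) = 1 and r⁻(x) = 1 − L‖x‖ (abstaining gives reward 0 in both cases). Define Reg⁺ = Σ_{t=1}^T [max(r⁺(x_t),0) − (r⁺(x_t) if y_t = commit else 0)] and Reg⁻ = Σ_{t=1}^T [max(r⁻(x_t),0) − (r⁻(x_t) if y_t = commit else 0)]. Then max(Reg⁺, Reg⁻) ≥ min(L·T − 1, T). -/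

import Mathlib

/-- **The limits of caution (deterministic core).** If every input lies at distance `T`
from the origin and `L·T > 1`, then for any action sequence `y` (where `true` = commit,
`false` = abstain), the larger of the regrets against the commit-reward functions
`r⁺(x) = 1` and `r⁻(x) = 1 - L‖x‖` is at least `min (L·T - 1) T`. -/
theorem stmt_1 (n : ℕ) (hn : 1 ≤ n) (L : ℝ) (hL : 0 < L)
    (T : ℕ) (hLT : 1 < L * T)
    (x : Fin T → EuclideanSpace ℝ (Fin n))
    (hx : ∀ t, ‖x t‖ = (T : ℝ))
    (y : Fin T → Bool) :
    min (L * T - 1) (T : ℝ) ≤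
      max (∑ t : Fin T, (max (1 : ℝ) 0 - if y t then (1 : ℝ) else 0))
          (∑ t : Fin T, (max (1 - L * ‖x t‖) 0 - if y t then 1 - L * ‖x t‖ else 0)) := by
  have hT : (1:ℝ) - L * T < 0 := by linarith
  have h2 : ∀ t, (max (1 - L * ‖x t‖) 0 - if y t then 1 - L * ‖x t‖ else 0)
      = if y t then L * T - 1 else 0 := by
    intro t
    rw [hx t]
    cases y t
    · simp
      linarith
    · simp only [if_pos rfl, ite_true]
      rw [max_eq_right hT.le]
      ring
  simp only [h2]
  by_cases hc : ∃ t, y t = true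
  · obtain ⟨t₀, ht₀⟩ := hc
    refine le_trans (min_le_left _ _) (le_max_of_le_right ?_)
    calc L * T - 1 = if y t₀ then L * T - 1 else 0 := by rw [ht₀]; simp
      _ ≤ ∑ t, (if y t then L * T - 1 else 0) :=
          Finset.single_le_sum (f := fun t => if y t then L * T - 1 else 0)
            (fun t _ => by split_ifs <;> linarith) (Finset.mem_univ t₀)
  · push_neg at hc
    refine le_trans (min_le_right _ _) (le_max_of_le_left ?_)
    have hf : ∀ t, y t = false := fun t => Bool.eq_false_iff.mpr (hc t)
    simp [hf]
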